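/- Let G be an undirected social network with w_{ii} = 0 for all buyers i, and suppose G is bipartite with bipartition (A, V ∖ A), i.e., w_{ij} = 0 whenever i, j ∈ A or i, j ∈ V ∖ A. Then the Influence-and-Exploit strategy IE(A, 1/2) extracts the maximum revenue of G: R_IE(A, 1/2) = R_max(G) = W/4. -/

import Mathlib

open Finset

/-- The revenue of a marketing strategy `(π, p)` on an undirected social network. -/
noncomputable def revenue {V : Type*} [Fintype V] [DecidableEq V]
    (w : V → V → ℝ) (π : V ≃ Fin (Fintype.card V)) (p : V → ℝ) : ℝ :=
  ∑ i, p i * (1 - p i) *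
    (w i i + ∑ j ∈ univ.filter (fun j => π j < π i), p j * w j i)

/-- The maximum revenue of an undirected social network. -/
noncomputable def maxRev {V : Type*} [Fintype V] [DecidableEq V]
    (w : V → V → ℝ) : ℝ :=
  sSup {r | ∃ (π : V ≃ Fin (Fintype.card V)) (p : V → ℝ),
    (∀ i, 1/2 ≤ p i ∧ p i ≤ 1) ∧ r = revenue w π p}

/-- The expected revenue of the Influence-and-Exploit strategy `IE(A, p)`. -/
noncomputable def ieRev {V : Type*} [Fintype V] [DecidableEq V]
    (w : V → V → ℝ) (A : Finset V) (p : ℝ) : ℝ :=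
  p * (1 - p) * ∑ i ∈ Aᶜ,
    (w i i + ∑ j ∈ A, w j i + (p / 2) * ∑ j ∈ Aᶜ \ {i}, w j i)

/-- `W`: total edge weight (each unordered pair counted once). -/
noncomputable def totalEdge {V : Type*} [Fintype V] [DecidableEq V]
    (w : V → V → ℝ) : ℝ :=
  (∑ i, ∑ j ∈ ({i} : Finset V)ᶜ, w i j) / 2

section Aux

variable {V : Type*} [Fintype V] [DecidableEq V]

lemma two_totalEdge (w : V → V → ℝ) (hself : ∀ i, w i i = 0) :
    2 * totalEdge w = ∑ i, ∑ j, w i j := by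
  unfold totalEdge
  rw [mul_div_cancel₀ _ (two_ne_zero)]
  refine Finset.sum_congr rfl fun i _ => ?_
  rw [← Finset.sum_add_sum_compl ({i} : Finset V) (fun j => w i j)]
  simp [hself i]

/-- The key double-counting identity. -/
lemma sum_filter_lt (w : V → V → ℝ) (hsymm : ∀ i j, w i j = w j i)
    (hself : ∀ i, w i i = 0) (π : V ≃ Fin (Fintype.card V)) :
    ∑ i, ∑ j ∈ univ.filter (fun j => π j < π i), w j i = totalEdge w := by
  have key : ∑ i, ∑ j, w j i
      = 2 * ∑ i, ∑ j ∈ univ.filter (fun j => π j < π i), w j i := by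
    have h1 : ∑ i, ∑ j, w j i
        = (∑ i, ∑ j, if π j < π i then w j i else 0)
          + ∑ i, ∑ j, if ¬ π j < π i then w j i else 0 := by
      rw [← Finset.sum_add_distrib]
      refine Finset.sum_congr rfl fun i _ => ?_
      rw [← Finset.sum_add_distrib]
      refine Finset.sum_congr rfl fun j _ => ?_
      by_cases h : π j < π i <;> simp [h]
    have h2 : ∑ i, ∑ j, (if ¬ π j < π i then w j i else 0)
        = ∑ i, ∑ j, if π j < π i then w j i else 0 := by
      rw [Finset.sum_comm]
      refine Finset.sum_congr rfl fun i _ => ?_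
      have : ∀ j, (if ¬ π i < π j then w j i else 0)
          = (if π j < π i then w j i else 0) + (if j = i then w j i else 0) := by
        intro j
        rcases lt_trichotomy (π j) (π i) with h | h | h
        · have hji : j ≠ i := fun e => by simp [e] at h
          simp [h, not_lt.mpr h.le, hji]
        · have hji : j = i := π.injective (by exact h)
          subst hji
          simp
        · have hji : j ≠ i := fun e => by simp [e] at h
          simp [h, not_lt.mpr h.le, hji, asymm h]
      calc ∑ j, (if ¬ π i < π j then w i j else 0)
          = ∑ j, ((if π j < π i then w j i else 0) + (if j = i then w j i else 0)) := by
            refine Finset.sum_congr rfl fun j _ => ?_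
            rw [hsymm i j]; exact this j
        _ = (∑ j, if π j < π i then w j i else 0) + ∑ j, if j = i then w j i else 0 := by
            rw [Finset.sum_add_distrib]
        _ = ∑ j, if π j < π i then w j i else 0 := by
            simp [Finset.sum_ite_eq', hself i]
    have h3 : ∑ i, ∑ j ∈ univ.filter (fun j => π j < π i), w j i
        = ∑ i, ∑ j, if π j < π i then w j i else 0 := by
      refine Finset.sum_congr rfl fun i _ => ?_
      rw [Finset.sum_filter]
    rw [h1, h2, h3]; ring
  have h4 : ∑ i, ∑ j, w j i = ∑ i, ∑ j, w i j := Finset.sum_comm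
  have h5 := two_totalEdge w hself
  linarith [key, h4, h5]

/-- Upper bound: every strategy's revenue is at most `W/4`. -/
lemma revenue_le (w : V → V → ℝ) (hsymm : ∀ i j, w i j = w j i)
    (hnonneg : ∀ i j, 0 ≤ w i j) (hself : ∀ i, w i i = 0)
    (π : V ≃ Fin (Fintype.card V)) (p : V → ℝ)
    (hp : ∀ i, 1/2 ≤ p i ∧ p i ≤ 1) :
    revenue w π p ≤ totalEdge w / 4 := by
  have hle : revenue w π p
      ≤ ∑ i, (1/4 : ℝ) * ∑ j ∈ univ.filter (fun j => π j < π i), w j i := by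
    unfold revenue
    refine Finset.sum_le_sum fun i _ => ?_
    have hpi := hp i
    have h1 : 0 ≤ p i * (1 - p i) := by nlinarith [hpi.1, hpi.2]
    have h2 : p i * (1 - p i) ≤ 1/4 := by nlinarith [hpi.1, hpi.2]
    have h3 : ∑ j ∈ univ.filter (fun j => π j < π i), p j * w j i
        ≤ ∑ j ∈ univ.filter (fun j => π j < π i), w j i := by
      refine Finset.sum_le_sum fun j _ => ?_
      have := (hp j).2
      nlinarith [hnonneg j i, (hp j).1]
    have h0 : 0 ≤ ∑ j ∈ univ.filter (fun j => π j < π i), p j * w j i := by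
      refine Finset.sum_nonneg fun j _ => ?_
      have := (hp j).1
      nlinarith [hnonneg j i]
    rw [hself i, zero_add]
    calc p i * (1 - p i) * ∑ j ∈ univ.filter (fun j => π j < π i), p j * w j i
        ≤ (1/4 : ℝ) * ∑ j ∈ univ.filter (fun j => π j < π i), p j * w j i := by
          exact mul_le_mul_of_nonneg_right h2 h0
      _ ≤ (1/4 : ℝ) * ∑ j ∈ univ.filter (fun j => π j < π i), w j i := by
          nlinarith [h3]
  rw [← Finset.mul_sum, sum_filter_lt w hsymm hself π] at hle
  linarith

/-- The influence-first permutation: members of `A` come first. -/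
noncomputable def bipPerm (A : Finset V) : V ≃ Fin (Fintype.card V) :=
  ((Equiv.sumCompl (· ∈ A)).symm.trans
    ((A.equivFin).sumCongr
      ((Equiv.subtypeEquivRight (fun x => (Finset.mem_compl (s := A) (a := x)).symm)).trans
        Aᶜ.equivFin))).trans
    (finSumFinEquiv.trans (finCongr (Finset.card_add_card_compl A)))

lemma bipPerm_lt (A : Finset V) {i j : V} (hj : j ∈ A) (hi : i ∉ A) :
    bipPerm A j < bipPerm A i := by
  have hval_j : (bipPerm A j : ℕ) < A.card := by
    simp [bipPerm, Equiv.sumCompl_symm_apply_of_pos (p := (· ∈ A)) hj]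
  have hval_i : A.card ≤ (bipPerm A i : ℕ) := by
    simp [bipPerm, Equiv.sumCompl_symm_apply_of_neg (p := (· ∈ A)) hi]
  exact Fin.lt_def.mpr (lt_of_lt_of_le hval_j hval_i)

end Aux

/-- For an undirected bipartite social network with zero self-weights and bipartition
`(A, V ∖ A)`, the strategy `IE(A, 1/2)` extracts the maximum revenue, which is `W/4`. -/
theorem bipartite_IE_optimal
    {V : Type*} [Fintype V] [DecidableEq V] (w : V → V → ℝ)
    (hsymm : ∀ i j, w i j = w j i) (hnonneg : ∀ i j, 0 ≤ w i j)
    (hself : ∀ i, w i i = 0) (A : Finset V)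
    (hbip : ∀ i j, ((i ∈ A ∧ j ∈ A) ∨ (i ∉ A ∧ j ∉ A)) → w i j = 0) :
    ieRev w A (1/2) = maxRev w ∧ maxRev w = totalEdge w / 4 := by
  -- the cross sum
  set S : ℝ := ∑ i ∈ Aᶜ, ∑ j ∈ A, w j i with hS
  -- totalEdge = S
  have hTE : totalEdge w = S := by
    have h2 : 2 * totalEdge w = ∑ i, ∑ j, w i j := two_totalEdge w hself
    have hsplit : ∑ i, ∑ j, w i j
        = (∑ i ∈ A, ∑ j, w i j) + ∑ i ∈ Aᶜ, ∑ j, w i j :=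
      (Finset.sum_add_sum_compl A _).symm
    have hA : ∑ i ∈ A, ∑ j, w i j = ∑ i ∈ A, ∑ j ∈ Aᶜ, w i j := by
      refine Finset.sum_congr rfl fun i hiA => ?_
      rw [← Finset.sum_add_sum_compl A (fun j => w i j)]
      have : ∑ j ∈ A, w i j = 0 :=
        Finset.sum_eq_zero fun j hjA => hbip i j (Or.inl ⟨hiA, hjA⟩)
      rw [this, zero_add]
    have hAc : ∑ i ∈ Aᶜ, ∑ j, w i j = ∑ i ∈ Aᶜ, ∑ j ∈ A, w i j := by
      refine Finset.sum_congr rfl fun i hiAc => ?_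
      rw [← Finset.sum_add_sum_compl A (fun j => w i j)]
      have : ∑ j ∈ Aᶜ, w i j = 0 := by
        refine Finset.sum_eq_zero fun j hjAc => ?_
        exact hbip i j (Or.inr ⟨Finset.mem_compl.mp hiAc, Finset.mem_compl.mp hjAc⟩)
      rw [this, add_zero]
    have hswap : ∑ i ∈ A, ∑ j ∈ Aᶜ, w i j = ∑ i ∈ Aᶜ, ∑ j ∈ A, w j i := by
      rw [Finset.sum_comm]
    have hsy : ∑ i ∈ Aᶜ, ∑ j ∈ A, w i j = ∑ i ∈ Aᶜ, ∑ j ∈ A, w j i := by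
      exact Finset.sum_congr rfl fun i _ => Finset.sum_congr rfl fun j _ => hsymm i j
    rw [hsplit, hA, hAc, hswap, hsy] at h2
    linarith
  -- ieRev equals S/4
  have hIE : ieRev w A (1/2) = S / 4 := by
    unfold ieRev
    have hin : ∀ i ∈ Aᶜ,
        w i i + ∑ j ∈ A, w j i + ((1:ℝ)/2 / 2) * ∑ j ∈ Aᶜ \ {i}, w j i
          = ∑ j ∈ A, w j i := by
      intro i hiAc
      have hz : ∑ j ∈ Aᶜ \ {i}, w j i = 0 := by
        refine Finset.sum_eq_zero fun j hj => ?_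
        have hjAc := (Finset.mem_sdiff.mp hj).1
        exact hbip j i (Or.inr ⟨Finset.mem_compl.mp hjAc, Finset.mem_compl.mp hiAc⟩)
      rw [hself i, hz]; ring
    rw [Finset.sum_congr rfl hin]
    ring
  -- the witness strategy
  set p : V → ℝ := fun i => if i ∈ A then 1 else 1/2 with hpdef
  have hpbound : ∀ i, 1/2 ≤ p i ∧ p i ≤ 1 := by
    intro i; by_cases h : i ∈ A <;> simp [hpdef, h] <;> norm_num
  have hrev : revenue w (bipPerm A) p = S / 4 := by
    unfold revenue
    have hterm : ∀ i : V, p i * (1 - p i) *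
        (w i i + ∑ j ∈ univ.filter (fun j => bipPerm A j < bipPerm A i), p j * w j i)
        = if i ∈ A then 0 else (1/4) * ∑ j ∈ A, w j i := by
      intro i
      by_cases hi : i ∈ A
      · simp [hpdef, hi]
      · have hfil : ∑ j ∈ univ.filter (fun j => bipPerm A j < bipPerm A i), p j * w j i
            = ∑ j ∈ A, w j i := by
          have hsub : A ⊆ univ.filter (fun j => bipPerm A j < bipPerm A i) := by
            intro j hj
            exact Finset.mem_filter.mpr ⟨Finset.mem_univ j, bipPerm_lt A hj hi⟩
          rw [← Finset.sum_subset hsub (fun j _ hjA => by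
            have : w j i = 0 := hbip j i (Or.inr ⟨hjA, hi⟩)
            simp [this])]
          exact Finset.sum_congr rfl fun j hj => by simp [hpdef, hj]
        rw [hfil, hself i]
        simp only [hpdef, if_neg hi]
        ring
    rw [Finset.sum_congr rfl (fun i _ => hterm i)]
    have hc : (univ.filter (fun i => ¬ i ∈ A)) = Aᶜ := by
      ext x; simp
    rw [Finset.sum_ite, Finset.sum_const_zero, zero_add, ← Finset.mul_sum, hc, hS]
    ring
  -- maxRev = S/4
  have hmem : (S / 4 : ℝ) ∈ {r | ∃ (π : V ≃ Fin (Fintype.card V)) (p : V → ℝ),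
      (∀ i, 1/2 ≤ p i ∧ p i ≤ 1) ∧ r = revenue w π p} :=
    ⟨bipPerm A, p, hpbound, hrev.symm⟩
  have hub : ∀ r ∈ {r | ∃ (π : V ≃ Fin (Fintype.card V)) (p : V → ℝ),
      (∀ i, 1/2 ≤ p i ∧ p i ≤ 1) ∧ r = revenue w π p}, r ≤ S / 4 := by
    rintro r ⟨π, q, hq, rfl⟩
    have := revenue_le w hsymm hnonneg hself π q hq
    rw [hTE] at this
    exact this
  have hmax : maxRev w = S / 4 := by
    unfold maxRev
    exact le_antisymm (csSup_le ⟨_, hmem⟩ hub) (le_csSup ⟨S/4, hub⟩ hmem)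
  refine ⟨by rw [hIE, hmax], by rw [hmax, hTE]⟩
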